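/- arXiv:1812.11395 — 2 statements merged into one kernel-verified Lean document; each statement's English description precedes it below -/
import Mathlib

section
/- Let n ≥ 1, T > 0, and let H : ℝⁿ × ℝⁿ → ℝ be twice continuously differentiable. Suppose φ : [0, T] × (ℝⁿ × ℝⁿ) → ℝⁿ × ℝⁿ is twice continuously differentiable, satisfies φ(0, x) = x for all x, and solves ∂φ/∂t(t, x) = X_H(φ(t, x)) for all (t, x), where X_H is the Hamiltonian vector field of H. Then the phase flow preserves phase volume: for every t ∈ [0, T] and every x, det(D_x φ(t, x)) = 1. (Liouville's phase-volume preservation, obtained in the paper as the n-th exterior power of the invariance of the symplectic two-form.) -/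
open Finset Set

/-- The determinant as a continuous multilinear map in the rows. -/
noncomputable def detCML (ι : Type*) [Fintype ι] [DecidableEq ι] :
    ContinuousMultilinearMap ℝ (fun _ : ι => (ι → ℝ)) ℝ :=
  MultilinearMap.mkContinuous
    (Matrix.detRowAlternating (R := ℝ) (n := ι)).toMultilinearMap
    (Nat.factorial (Fintype.card ι)) (by
      intro m
      have : (Matrix.detRowAlternating (R := ℝ) (n := ι)).toMultilinearMap m
          = Matrix.det (Matrix.of fun i j => m i j) := rfl
      rw [this, Matrix.det_apply]
      refine le_trans (Finset.abs_sum_le_sum_abs _ _) ?_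
      have hcard : (Finset.univ : Finset (Equiv.Perm ι)).card = Nat.factorial (Fintype.card ι) := by
        rw [Finset.card_univ, Fintype.card_perm]
      calc ∑ σ : Equiv.Perm ι, |Equiv.Perm.sign σ • ∏ i, (Matrix.of fun i j => m i j) (σ i) i|
          ≤ ∑ σ : Equiv.Perm ι, ∏ i, ‖m i‖ := by
            refine Finset.sum_le_sum fun σ _ => ?_
            rw [Units.smul_def, zsmul_eq_mul, abs_mul]
            have : |((Equiv.Perm.sign σ : ℤ) : ℝ)| = 1 := by
              rcases Int.units_eq_one_or (Equiv.Perm.sign σ) with h | h <;> simp [h]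
            rw [this, one_mul, abs_prod]
            calc ∏ i, |m (σ i) i| ≤ ∏ i, ‖m (σ i)‖ := by
                  refine Finset.prod_le_prod (fun i _ => abs_nonneg _) fun i _ => ?_
                  exact norm_le_pi_norm (m (σ i)) i
              _ = ∏ i, ‖m i‖ := Equiv.prod_comp σ (fun k => ‖m k‖)
        _ = (Nat.factorial (Fintype.card ι)) * ∏ i, ‖m i‖ := by
            rw [Finset.sum_const, hcard, nsmul_eq_mul])

/-- Jacobi / Liouville formula for a matrix solving `M' = N * M`. -/
theorem hasDerivAt_det_of_hasDerivAt_rows {ι : Type*} [Fintype ι] [DecidableEq ι]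
    {M : ℝ → ι → ι → ℝ} {N : Matrix ι ι ℝ} {t₀ : ℝ}
    (h : ∀ i, HasDerivAt (fun t => M t i) ((N * Matrix.of (M t₀)) i) t₀) :
    HasDerivAt (fun t => Matrix.det (Matrix.of (M t)))
      (N.trace * Matrix.det (Matrix.of (M t₀))) t₀ := by
  have hM : HasDerivAt (fun t => M t) (fun i => (N * Matrix.of (M t₀)) i) t₀ :=
    hasDerivAt_pi.2 h
  have hD := ((detCML ι).hasFDerivAt (M t₀)).comp_hasDerivAt t₀ hM
  have key : (detCML ι).linearDeriv (M t₀) (fun i => (N * Matrix.of (M t₀)) i)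
      = N.trace * Matrix.det (Matrix.of (M t₀)) := by
    rw [ContinuousMultilinearMap.linearDeriv_apply]
    have hrow : ∀ i, Function.update (M t₀) i ((N * Matrix.of (M t₀)) i)
        = (Matrix.updateRow (Matrix.of (M t₀)) i
            (∑ k, N i k • (Matrix.of (M t₀)) k) : Matrix ι ι ℝ) := by
      intro i
      have : ((N * Matrix.of (M t₀)) i) = ∑ k, N i k • (Matrix.of (M t₀)) k := by
        funext j
        simp [Matrix.mul_apply, Finset.sum_apply]
      rw [this]; rfl
    calc (∑ i, detCML ι (Function.update (M t₀) i ((N * Matrix.of (M t₀)) i)))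
        = ∑ i, (Matrix.updateRow (Matrix.of (M t₀)) i
            (∑ k, N i k • (Matrix.of (M t₀)) k)).det := by
          refine Finset.sum_congr rfl fun i _ => ?_
          rw [hrow i]; rfl
      _ = ∑ i, N i i • (Matrix.of (M t₀)).det := by
          refine Finset.sum_congr rfl fun i _ => ?_
          exact Matrix.det_updateRow_sum _ i (fun k => N i k)
      _ = N.trace * Matrix.det (Matrix.of (M t₀)) := by
          rw [Matrix.trace]
          simp [Finset.sum_mul, Matrix.diag]
  rw [key] at hD
  exact hD

/-- The Hamiltonian vector field `X_H(q,p) = (∂H/∂p, −∂H/∂q)` of a Hamiltonian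
`H : ℝⁿ × ℝⁿ → ℝ`. -/
noncomputable def hamVF (n : ℕ) (H : (Fin n → ℝ) × (Fin n → ℝ) → ℝ)
    (x : (Fin n → ℝ) × (Fin n → ℝ)) : (Fin n → ℝ) × (Fin n → ℝ) :=
  (fun i => fderiv ℝ H x (0, Pi.single i 1),
   fun i => - fderiv ℝ H x (Pi.single i 1, 0))

/-- The derivative of the Hamiltonian vector field, expressed through the second
derivative of `H`. -/
noncomputable def hamD (n : ℕ) (H : (Fin n → ℝ) × (Fin n → ℝ) → ℝ)
    (y : (Fin n → ℝ) × (Fin n → ℝ)) :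
    ((Fin n → ℝ) × (Fin n → ℝ)) →L[ℝ] ((Fin n → ℝ) × (Fin n → ℝ)) :=
  (ContinuousLinearMap.pi fun i =>
      (ContinuousLinearMap.apply ℝ ℝ ((0, Pi.single i 1) : (Fin n → ℝ) × (Fin n → ℝ))).comp
        (fderiv ℝ (fderiv ℝ H) y)).prod
  (ContinuousLinearMap.pi fun i =>
      -((ContinuousLinearMap.apply ℝ ℝ ((Pi.single i 1, 0) : (Fin n → ℝ) × (Fin n → ℝ))).comp
        (fderiv ℝ (fderiv ℝ H) y)))

theorem hamVF_contDiff (n : ℕ) (H : (Fin n → ℝ) × (Fin n → ℝ) → ℝ) (hH : ContDiff ℝ 2 H) :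
    ContDiff ℝ 1 (hamVF n H) := by
  apply ContDiff.prodMk
  · apply contDiff_pi.2; intro i
    exact (hH.fderiv_right (by norm_num)).clm_apply contDiff_const
  · apply contDiff_pi.2; intro i
    exact ((hH.fderiv_right (by norm_num)).clm_apply contDiff_const).neg

theorem hamVF_hasFDerivAt (n : ℕ) (H : (Fin n → ℝ) × (Fin n → ℝ) → ℝ) (hH : ContDiff ℝ 2 H)
    (y : (Fin n → ℝ) × (Fin n → ℝ)) :
    HasFDerivAt (hamVF n H) (hamD n H y) y := by
  have hW : HasFDerivAt (fderiv ℝ H) (fderiv ℝ (fderiv ℝ H) y) y :=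
    (((hH.fderiv_right (m := 1) (by norm_num)).differentiable (by norm_num)) y).hasFDerivAt
  apply HasFDerivAt.prodMk
  · apply hasFDerivAt_pi''
    intro i
    have := hW.clm_apply (hasFDerivAt_const ((0, Pi.single i 1) : (Fin n → ℝ) × (Fin n → ℝ)) y)
    convert this using 1
    refine ContinuousLinearMap.ext fun w => ?_
    simp
  · apply hasFDerivAt_pi''
    intro i
    have := (hW.clm_apply
      (hasFDerivAt_const ((Pi.single i 1, 0) : (Fin n → ℝ) × (Fin n → ℝ)) y)).neg
    convert this using 1
    · rfl
    refine ContinuousLinearMap.ext fun w => ?_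
    simp

/-- Liouville's theorem: the phase flow of a Hamiltonian system preserves
phase volume, i.e. the determinant of the spatial derivative of the flow is `1`. -/
theorem hamiltonian_flow_preserves_volume (n : ℕ) (hn : 1 ≤ n) (T : ℝ) (hT : 0 < T)
    (H : (Fin n → ℝ) × (Fin n → ℝ) → ℝ) (hH : ContDiff ℝ 2 H)
    (φ : ℝ → (Fin n → ℝ) × (Fin n → ℝ) → (Fin n → ℝ) × (Fin n → ℝ))
    (hφ : ContDiff ℝ 2 (fun p : ℝ × ((Fin n → ℝ) × (Fin n → ℝ)) => φ p.1 p.2))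
    (hφ0 : ∀ x, φ 0 x = x)
    (hflow : ∀ t ∈ Icc (0:ℝ) T, ∀ x,
      HasDerivAt (fun τ => φ τ x) (hamVF n H (φ t x)) t) :
    ∀ t ∈ Icc (0:ℝ) T, ∀ x,
      LinearMap.det ((fderiv ℝ (φ t) x : (Fin n → ℝ) × (Fin n → ℝ) →L[ℝ]
        (Fin n → ℝ) × (Fin n → ℝ)) : (Fin n → ℝ) × (Fin n → ℝ) →ₗ[ℝ]
        (Fin n → ℝ) × (Fin n → ℝ)) = 1 := by
  classical
  intro t ht x
  let X := (Fin n → ℝ) × (Fin n → ℝ)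
  let F : ℝ × X → X := fun p => φ p.1 p.2
  have hFc : ContDiff ℝ 2 F := hφ
  have hFd : Differentiable ℝ F := hFc.differentiable (by norm_num)
  let Ψ : ℝ × X → (ℝ × X →L[ℝ] X) := fderiv ℝ F
  have hΨ : ContDiff ℝ 1 Ψ := hFc.fderiv_right (by norm_num)
  have hΨd : Differentiable ℝ Ψ := hΨ.differentiable (by norm_num)
  let A : ℝ → (X →L[ℝ] X) := fun τ => (Ψ (τ, x)).comp (ContinuousLinearMap.inr ℝ ℝ X)
  -- the spatial derivative of the flow is A
  have hA : ∀ τ, HasFDerivAt (φ τ) (A τ) x := by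
    intro τ
    exact (hFd (τ, x)).hasFDerivAt.comp x (hasFDerivAt_prodMk_right τ x)
  -- curve derivative
  have hcurve : ∀ z : X, ∀ s : ℝ, HasDerivAt (fun τ : ℝ => ((τ, z) : ℝ × X)) (1, 0) s :=
    fun z s => (hasDerivAt_id s).prodMk (hasDerivAt_const s z)
  -- the ODE satisfied by A on the interval
  have hODE : ∀ s ∈ Icc (0:ℝ) T, HasDerivAt A ((hamD n H (φ s x)).comp (A s)) s := by
    intro s hs
    have h1 : HasDerivAt (fun τ => Ψ (τ, x)) (fderiv ℝ Ψ (s, x) (1, 0)) s :=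
      (hΨd (s, x)).hasFDerivAt.comp_hasDerivAt s (hcurve x s)
    have h2 : HasDerivAt A ((fderiv ℝ Ψ (s, x) (1, 0)).comp (ContinuousLinearMap.inr ℝ ℝ X)) s := by
      have := h1.clm_comp (hasDerivAt_const s (ContinuousLinearMap.inr ℝ ℝ X))
      simpa using this
    have key : (fderiv ℝ Ψ (s, x) (1, 0)).comp (ContinuousLinearMap.inr ℝ ℝ X)
        = (hamD n H (φ s x)).comp (A s) := by
      -- the function z ↦ ∂ₜF(s,z) agrees with X_H ∘ φ s
      have hGX : (fun z : X => Ψ (s, z) (1, 0)) = fun z => hamVF n H (φ s z) := by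
        funext z
        have hc : HasDerivAt (fun τ => φ τ z) (Ψ (s, z) (1, 0)) s := by
          have := (hFd (s, z)).hasFDerivAt.comp_hasDerivAt s (hcurve z s); exact this
        exact hc.unique (hflow s hs z)
      -- derivative of that function computed two ways
      have hg1 : HasFDerivAt (fun z : X => Ψ (s, z) (1, 0))
          (((Ψ (s, x)).comp (0 : ℝ × X →L[ℝ] ℝ × X) + (fderiv ℝ Ψ (s, x)).flip (1, 0)).comp
            (ContinuousLinearMap.inr ℝ ℝ X)) x := by
        have hp : HasFDerivAt (fun p : ℝ × X => Ψ p (1, 0))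
            ((Ψ (s, x)).comp (0 : ℝ × X →L[ℝ] ℝ × X) + (fderiv ℝ Ψ (s, x)).flip (1, 0)) (s, x) :=
          (hΨd (s, x)).hasFDerivAt.clm_apply (hasFDerivAt_const (1, 0) (s, x))
        exact hp.comp x (hasFDerivAt_prodMk_right s x)
      have hg2 : HasFDerivAt (fun z : X => hamVF n H (φ s z))
          ((hamD n H (φ s x)).comp (A s)) x :=
        (hamVF_hasFDerivAt n H hH (φ s x)).comp x (hA s)
      rw [hGX] at hg1
      have hEq := hg1.unique hg2
      -- symmetry of second derivative
      have hsymm : IsSymmSndFDerivAt ℝ F (s, x) :=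
        hFc.contDiffAt.isSymmSndFDerivAt (by simp)
      refine ContinuousLinearMap.ext fun v => ?_
      have lhs1 : ((fderiv ℝ Ψ (s, x) (1, 0)).comp (ContinuousLinearMap.inr ℝ ℝ X)) v
          = fderiv ℝ Ψ (s, x) ((0 : ℝ × X) + (0, v)) (1, 0) := by
        simp only [ContinuousLinearMap.comp_apply, ContinuousLinearMap.inr_apply]
        rw [zero_add]
        exact hsymm.eq (1, 0) (0, v)
      rw [← hEq]
      simp only [ContinuousLinearMap.comp_apply, ContinuousLinearMap.inr_apply,
        ContinuousLinearMap.add_apply, ContinuousLinearMap.flip_apply, map_zero,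
        ContinuousLinearMap.zero_apply, zero_add] at lhs1 ⊢
      simpa using lhs1
    rw [key] at h2
    exact h2
  -- basis and matrices
  let bP : Module.Basis (Fin n) ℝ (Fin n → ℝ) := Pi.basisFun ℝ (Fin n)
  let b : Module.Basis (Fin n ⊕ Fin n) ℝ X := bP.prod bP
  have hbinl : ∀ i, b (Sum.inl i) = ((Pi.single i 1, 0) : X) := by
    intro i
    refine Prod.ext ?_ ?_
    · rw [Module.Basis.prod_apply_inl_fst]; exact Pi.basisFun_apply ℝ (Fin n) i
    · exact Module.Basis.prod_apply_inl_snd bP bP i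
  have hbinr : ∀ i, b (Sum.inr i) = ((0, Pi.single i 1) : X) := by
    intro i
    refine Prod.ext ?_ ?_
    · exact Module.Basis.prod_apply_inr_fst bP bP i
    · rw [Module.Basis.prod_apply_inr_snd]; exact Pi.basisFun_apply ℝ (Fin n) i
  let M : ℝ → (Fin n ⊕ Fin n) → (Fin n ⊕ Fin n) → ℝ :=
    fun τ => LinearMap.toMatrix b b ((A τ : X →L[ℝ] X) : X →ₗ[ℝ] X)
  -- entry evaluation as a continuous linear map
  let eL : (Fin n ⊕ Fin n) → (Fin n ⊕ Fin n) → ((X →L[ℝ] X) →ₗ[ℝ] ℝ) := fun i j =>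
    { toFun := fun C : X →L[ℝ] X => LinearMap.toMatrix b b (C : X →ₗ[ℝ] X) i j,
      map_add' := by intro C D; simp
      map_smul' := by intro c C; simp }
  let e : (Fin n ⊕ Fin n) → (Fin n ⊕ Fin n) → ((X →L[ℝ] X) →L[ℝ] ℝ) := fun i j =>
    LinearMap.toContinuousLinearMap (eL i j)
  have he : ∀ i j C, e i j C = LinearMap.toMatrix b b ((C : X →L[ℝ] X) : X →ₗ[ℝ] X) i j :=
    fun i j C => rfl
  -- the trace of the derivative of the Hamiltonian vector field vanishes
  have htr : ∀ y : X,
      (LinearMap.toMatrix b b ((hamD n H y : X →L[ℝ] X) : X →ₗ[ℝ] X)).trace = 0 := by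
    intro y
    have hsymmH : IsSymmSndFDerivAt ℝ H y := hH.contDiffAt.isSymmSndFDerivAt (by simp)
    rw [Matrix.trace, Fintype.sum_sum_type]
    have h1 : ∀ i : Fin n,
        (LinearMap.toMatrix b b ((hamD n H y : X →L[ℝ] X) : X →ₗ[ℝ] X)).diag (Sum.inl i)
        = fderiv ℝ (fderiv ℝ H) y ((Pi.single i 1, 0) : X) ((0, Pi.single i 1) : X) := by
      intro i
      rw [Matrix.diag, LinearMap.toMatrix_apply, hbinl i]
      rw [Module.Basis.prod_repr_inl]
      rfl
    have h2 : ∀ i : Fin n,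
        (LinearMap.toMatrix b b ((hamD n H y : X →L[ℝ] X) : X →ₗ[ℝ] X)).diag (Sum.inr i)
        = -(fderiv ℝ (fderiv ℝ H) y ((0, Pi.single i 1) : X) ((Pi.single i 1, 0) : X)) := by
      intro i
      rw [Matrix.diag, LinearMap.toMatrix_apply, hbinr i]
      rw [Module.Basis.prod_repr_inr]
      rfl
    rw [Finset.sum_congr rfl (fun i _ => h1 i), Finset.sum_congr rfl (fun i _ => h2 i)]
    rw [Finset.sum_neg_distrib]
    rw [Finset.sum_congr rfl (fun i _ => hsymmH.eq ((Pi.single i 1, 0) : X) ((0, Pi.single i 1) : X))]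
    ring
  -- per-row derivative of the matrix M
  have hrowD : ∀ s ∈ Icc (0:ℝ) T, ∀ i, HasDerivAt (fun τ => M τ i)
      (((LinearMap.toMatrix b b ((hamD n H (φ s x) : X →L[ℝ] X) : X →ₗ[ℝ] X)) *
        Matrix.of (M s)) i) s := by
    intro s hs i
    apply hasDerivAt_pi.2
    intro j
    have hC := (e i j).hasFDerivAt.comp_hasDerivAt s (hODE s hs)
    have harg : e i j ((hamD n H (φ s x)).comp (A s))
        = ((LinearMap.toMatrix b b ((hamD n H (φ s x) : X →L[ℝ] X) : X →ₗ[ℝ] X)) *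
            Matrix.of (M s)) i j := by
      rw [he, ContinuousLinearMap.toLinearMap_comp, LinearMap.toMatrix_comp b b b]
      rfl
    rw [harg] at hC
    exact hC
  let J : ℝ → ℝ := fun τ => Matrix.det (Matrix.of (M τ))
  have hJ : ∀ s ∈ Icc (0:ℝ) T, HasDerivAt J 0 s := by
    intro s hs
    have := hasDerivAt_det_of_hasDerivAt_rows (hrowD s hs)
    rwa [htr (φ s x), zero_mul] at this
  have hconst : ∀ s ∈ Icc (0:ℝ) T, J s = J 0 := by
    have hcont : ContinuousOn J (Icc 0 T) :=
      fun z hz => ((hJ z hz).continuousAt).continuousWithinAt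
    exact constant_of_has_deriv_right_zero hcont
      (fun z hz => ((hJ z (Ico_subset_Icc_self hz)).hasDerivWithinAt))
  have hA0 : A 0 = ContinuousLinearMap.id ℝ X := by
    have h1 : HasFDerivAt (φ 0) (ContinuousLinearMap.id ℝ X) x := by
      have hid : φ 0 = fun y : X => y := funext hφ0
      rw [hid]; exact hasFDerivAt_id x
    exact ((hA 0).unique h1)
  have hJ0 : J 0 = 1 := by
    show (Matrix.of (M 0)).det = 1
    have hM0 : M 0 = LinearMap.toMatrix b b
        ((ContinuousLinearMap.id ℝ X : X →L[ℝ] X) : X →ₗ[ℝ] X) := by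
      show LinearMap.toMatrix b b ((A 0 : X →L[ℝ] X) : X →ₗ[ℝ] X) = _
      rw [hA0]
    rw [hM0]
    rw [ContinuousLinearMap.coe_id, LinearMap.toMatrix_id]
    exact Matrix.det_one
  rw [(hA t).fderiv]
  calc LinearMap.det ((A t : X →L[ℝ] X) : X →ₗ[ℝ] X)
      = (LinearMap.toMatrix b b ((A t : X →L[ℝ] X) : X →ₗ[ℝ] X)).det :=
        (LinearMap.det_toMatrix b _).symm
    _ = J t := rfl
    _ = J 0 := hconst t ht
    _ = 1 := hJ0
end

section
/- Let (W_t)_{t≥0} be a standard one-dimensional Brownian motion, let a ∈ ℝ, and let 0 ≤ s ≤ r. Then E[cos²(a W_s) · cos²(a W_r)] = (1/8) ( e^{−2 a² r − 6 a² s} + e^{−2 a² (r − s)} + 2 e^{−2 a² s} + 2 e^{−2 a² r} + 2 ). (This two-time expectation, computed in the paper's appendix using the stationary independent increments of the driving processes and their characteristic functions, is the key step in the second-moment computation for the ergodic average of cos² along the unperturbed flow.) -/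
open MeasureTheory ProbabilityTheory Real Filter

/-- A standard one-dimensional Brownian motion: starts at `0` a.s., jointly
measurable with a.s. continuous sample paths, has independent increments, and
its increments over `[s,t]` (for `0 ≤ s ≤ t`) are Gaussian `N(0, t − s)`. -/
structure IsStandardBrownian {Ω : Type*} [MeasureSpace Ω] (W : ℝ → Ω → ℝ) : Prop where
  start_zero : ∀ᵐ ω ∂(ℙ : Measure Ω), W 0 ω = 0
  jointly_measurable : Measurable (fun p : ℝ × Ω => W p.1 p.2)
  cont_paths : ∀ᵐ ω ∂(ℙ : Measure Ω), Continuous fun t => W t ω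
  indep_incr : ∀ (k : ℕ) (t : Fin (k + 1) → ℝ), (∀ i, 0 ≤ t i) → Monotone t →
    iIndepFun
      (fun (i : Fin k) ω => W (t i.succ) ω - W (t i.castSucc) ω) (ℙ : Measure Ω)
  gaussian_incr : ∀ s t : ℝ, 0 ≤ s → s ≤ t →
    Measure.map (fun ω => W t ω - W s ω) (ℙ : Measure Ω)
      = gaussianReal 0 (t - s).toNNReal

lemma my_integral_cos_gaussian (c : ℝ) (v : NNReal) :
    ∫ x, Real.cos (c * x) ∂(gaussianReal 0 v) = Real.exp (-c ^ 2 * v / 2) := by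
  by_cases hv : v = 0
  · simp [hv, gaussianReal_zero_var]
  · have hvpos : (0 : ℝ) < v := lt_of_le_of_ne v.coe_nonneg (by exact_mod_cast (Ne.symm hv))
    rw [gaussianReal_of_var_ne_zero _ hv]
    have hpdf : gaussianPDF 0 v = fun x => ((Real.toNNReal (gaussianPDFReal 0 v x) : NNReal) : ENNReal) := by
      ext x; rw [gaussianPDF]; rfl
    rw [hpdf, integral_withDensity_eq_integral_smul
      ((measurable_gaussianPDFReal 0 v).real_toNNReal)]
    simp only [NNReal.smul_def, Real.coe_toNNReal _ (gaussianPDFReal_nonneg 0 v _)]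
    -- compute ∫ x, gaussianPDFReal 0 v x * cos (c*x)
    set b : ℂ := 1 / (2 * (v : ℝ)) with hb_def
    have hb : 0 < b.re := by
      simp [hb_def]
      positivity
    have key := fourierIntegral_gaussian hb (c : ℂ)
    have hInt : Integrable (fun x : ℝ => Complex.exp (Complex.I * c * x) * Complex.exp (-b * x ^ 2)) := by
      have := integrable_cexp_quadratic hb (Complex.I * c) 0
      refine this.congr (ae_of_all _ fun x => ?_)
      simp only [← Complex.exp_add]
      ring_nf
    have hre := congrArg Complex.re key
    have hre' := integral_re (𝕜 := ℂ) hInt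
    simp only [RCLike.re_to_complex] at hre'
    rw [← hre'] at hre
    have hlhs : ∀ x : ℝ, (Complex.exp (Complex.I * c * x) * Complex.exp (-b * x ^ 2)).re
        = Real.cos (c * x) * Real.exp (-x ^ 2 / (2 * v)) := by
      intro x
      have hz : Complex.I * c * x + -b * x ^ 2
          = ((-x ^ 2 / (2 * (v:ℝ)) : ℝ) : ℂ) + ((c * x : ℝ) : ℂ) * Complex.I := by
        rw [hb_def]; push_cast
        have : ((v : ℝ) : ℂ) ≠ 0 := by exact_mod_cast hvpos.ne'
        field_simp
        ring
      rw [← Complex.exp_add, hz, Complex.exp_re]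
      simp only [Complex.add_re, Complex.add_im, Complex.ofReal_re, Complex.ofReal_im,
        Complex.mul_re, Complex.mul_im, Complex.I_re, Complex.I_im, mul_zero, mul_one,
        zero_mul, sub_zero, zero_add, add_zero, zero_sub]
      ring
    simp_rw [hlhs] at hre
    have hrhs : ((↑π / b) ^ (1 / 2 : ℂ) * Complex.exp (-(c:ℂ) ^ 2 / (4 * b))).re
        = Real.sqrt (2 * π * v) * Real.exp (-c ^ 2 * v / 2) := by
      have hπb : (↑π / b : ℂ) = ((2 * π * (v:ℝ) : ℝ) : ℂ) := by
        rw [hb_def]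
        push_cast
        field_simp
      have hc : (-(c:ℂ) ^ 2 / (4 * b)) = ((-c ^ 2 * v / 2 : ℝ) : ℂ) := by
        rw [hb_def]
        push_cast
        field_simp
        ring
      rw [hπb, hc, ← Complex.ofReal_exp]
      rw [show (1/2 : ℂ) = ((1/2 : ℝ) : ℂ) by norm_num]
      rw [← Complex.ofReal_cpow (by positivity) (1/2 : ℝ)]
      rw [← Complex.ofReal_mul, Complex.ofReal_re, Real.sqrt_eq_rpow]
    rw [hrhs] at hre
    have hgoal : (fun x => gaussianPDFReal 0 v x • Real.cos (c * x))
        = fun x => (Real.sqrt (2 * π * v))⁻¹ * (Real.cos (c * x) * Real.exp (-x ^ 2 / (2 * v))) := by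
      ext x
      rw [gaussianPDFReal]
      simp only [smul_eq_mul, sub_zero]
      ring
    rw [hgoal, MeasureTheory.integral_const_mul, hre, ← mul_assoc,
      inv_mul_cancel₀ (ne_of_gt (Real.sqrt_pos.mpr (by positivity))), one_mul]

lemma my_integrable_bdd {α : Type*} [MeasurableSpace α] {μ : Measure α} [IsFiniteMeasure μ]
    {f : α → ℝ} (hf : AEStronglyMeasurable f μ) {C : ℝ} (h : ∀ x, |f x| ≤ C) :
    Integrable f μ :=
  (integrable_const C).mono' hf (Filter.univ_mem' h)

lemma my_integral_sin_gaussian (c : ℝ) (v : NNReal) :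
    ∫ x, Real.sin (c * x) ∂(gaussianReal 0 v) = 0 := by
  have hmap : (gaussianReal 0 v).map (fun x => -1 * x) = gaussianReal 0 v := by
    have := gaussianReal_map_const_mul (μ := 0) (v := v) (-1)
    simpa using this.trans (by norm_num)
  have hmeas : Measurable fun x : ℝ => Real.sin (c * x) :=
    (Real.measurable_sin.comp (measurable_const.mul measurable_id))
  have h1 : ∫ x, Real.sin (c * x) ∂(gaussianReal 0 v)
      = ∫ x, Real.sin (c * (-1 * x)) ∂(gaussianReal 0 v) := by
    conv_lhs => rw [← hmap]
    rw [integral_map (by fun_prop) hmeas.aestronglyMeasurable]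
  have h2 : ∀ x : ℝ, Real.sin (c * (-1 * x)) = - Real.sin (c * x) := by
    intro x; rw [show c * (-1 * x) = -(c * x) by ring, Real.sin_neg]
  simp_rw [h2, integral_neg] at h1
  linarith

lemma my_inner (a x : ℝ) (v : NNReal) :
    ∫ y, Real.cos (a * (x + y)) ^ 2 ∂(gaussianReal 0 v)
      = 1 / 2 + Real.cos (2 * a * x) * Real.exp (-(2 * a) ^ 2 * v / 2) / 2 := by
  have hid : ∀ y : ℝ, Real.cos (a * (x + y)) ^ 2
      = 1 / 2 + (Real.cos (2 * a * x) / 2) * Real.cos (2 * a * y)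
          - (Real.sin (2 * a * x) / 2) * Real.sin (2 * a * y) := by
    intro y
    rw [Real.cos_sq, show 2 * (a * (x + y)) = 2 * a * x + 2 * a * y by ring, Real.cos_add]
    ring
  simp_rw [hid]
  have hcos : Integrable (fun y => (Real.cos (2 * a * x) / 2) * Real.cos (2 * a * y))
      (gaussianReal 0 v) := by
    apply my_integrable_bdd (Measurable.aestronglyMeasurable (by fun_prop)) (C := |Real.cos (2 * a * x) / 2|)
    intro y
    rw [abs_mul]
    calc |Real.cos (2*a*x)/2| * |Real.cos (2*a*y)| ≤ |Real.cos (2*a*x)/2| * 1 := by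
          exact mul_le_mul_of_nonneg_left (Real.abs_cos_le_one _) (abs_nonneg _)
      _ = _ := mul_one _
  have hsin : Integrable (fun y => (Real.sin (2 * a * x) / 2) * Real.sin (2 * a * y))
      (gaussianReal 0 v) := by
    apply my_integrable_bdd (Measurable.aestronglyMeasurable (by fun_prop)) (C := |Real.sin (2 * a * x) / 2|)
    intro y
    rw [abs_mul]
    calc |Real.sin (2*a*x)/2| * |Real.sin (2*a*y)| ≤ |Real.sin (2*a*x)/2| * 1 := by
          exact mul_le_mul_of_nonneg_left (Real.abs_sin_le_one _) (abs_nonneg _)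
      _ = _ := mul_one _
  have h12 : Integrable (fun y => 1 / 2 + (Real.cos (2 * a * x) / 2) * Real.cos (2 * a * y))
      (gaussianReal 0 v) := by exact (integrable_const _).add hcos
  rw [integral_sub h12 hsin, integral_add (integrable_const _) hcos,
    integral_const, MeasureTheory.integral_const_mul, MeasureTheory.integral_const_mul,
    my_integral_cos_gaussian, my_integral_sin_gaussian]
  simp
  ring

lemma my_outer (a C : ℝ) (v : NNReal) :
    ∫ x, Real.cos (a * x) ^ 2 * (1 / 2 + Real.cos (2 * a * x) * C / 2) ∂(gaussianReal 0 v)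
      = 1 / 4 + C / 8 + (1 / 4 + C / 4) * Real.exp (-(2 * a) ^ 2 * v / 2)
          + C / 8 * Real.exp (-(4 * a) ^ 2 * v / 2) := by
  have hid : ∀ x : ℝ, Real.cos (a * x) ^ 2 * (1 / 2 + Real.cos (2 * a * x) * C / 2)
      = (1 / 4 + C / 8) + (1 / 4 + C / 4) * Real.cos (2 * a * x)
          + (C / 8) * Real.cos (4 * a * x) := by
    intro x
    rw [show Real.cos (a * x) ^ 2 = 1 / 2 + Real.cos (2 * a * x) / 2 by
        rw [Real.cos_sq]; ring_nf,
      show Real.cos (4 * a * x) = 2 * Real.cos (2 * a * x) ^ 2 - 1 by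
        rw [show (4:ℝ) * a * x = 2 * (2 * a * x) by ring, Real.cos_two_mul]]
    ring
  simp_rw [hid]
  have h2 : Integrable (fun x => (1 / 4 + C / 4) * Real.cos (2 * a * x)) (gaussianReal 0 v) := by
    apply my_integrable_bdd (Measurable.aestronglyMeasurable (by fun_prop)) (C := |1 / 4 + C / 4|)
    intro x
    rw [abs_mul]
    calc _ ≤ |1/4 + C/4| * 1 := mul_le_mul_of_nonneg_left (Real.abs_cos_le_one _) (abs_nonneg _)
      _ = _ := mul_one _
  have h3 : Integrable (fun x => (C / 8) * Real.cos (4 * a * x)) (gaussianReal 0 v) := by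
    apply my_integrable_bdd (Measurable.aestronglyMeasurable (by fun_prop)) (C := |C / 8|)
    intro x
    rw [abs_mul]
    calc _ ≤ |C/8| * 1 := mul_le_mul_of_nonneg_left (Real.abs_cos_le_one _) (abs_nonneg _)
      _ = _ := mul_one _
  have h12 : Integrable (fun x => (1 / 4 + C / 8) + (1 / 4 + C / 4) * Real.cos (2 * a * x))
      (gaussianReal 0 v) := by exact (integrable_const _).add h2
  rw [integral_add h12 h3, integral_add (integrable_const _) h2,
    integral_const, MeasureTheory.integral_const_mul, MeasureTheory.integral_const_mul,
    my_integral_cos_gaussian, my_integral_cos_gaussian]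
  simp

/-- The two-time expectation of `cos²(a W_s) cos²(a W_r)` for `0 ≤ s ≤ r`:
`E[cos²(aW_s) cos²(aW_r)]
  = (1/8)(e^{−2a²r−6a²s} + e^{−2a²(r−s)} + 2e^{−2a²s} + 2e^{−2a²r} + 2)`. -/
theorem brownian_two_time_cos_sq_expectation {Ω : Type*} [MeasureSpace Ω]
    [IsProbabilityMeasure (ℙ : Measure Ω)]
    (W : ℝ → Ω → ℝ) (hW : IsStandardBrownian W) (a : ℝ)
    (s r : ℝ) (hs : 0 ≤ s) (hsr : s ≤ r) :
    ∫ ω, (Real.cos (a * W s ω)) ^ 2 * (Real.cos (a * W r ω)) ^ 2 ∂ℙ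
      = (1 / 8) * (Real.exp (-2 * a ^ 2 * r - 6 * a ^ 2 * s)
          + Real.exp (-2 * a ^ 2 * (r - s))
          + 2 * Real.exp (-2 * a ^ 2 * s)
          + 2 * Real.exp (-2 * a ^ 2 * r) + 2) := by
  have hWt : ∀ t : ℝ, Measurable (fun ω => W t ω) := fun t =>
    hW.jointly_measurable.comp (measurable_const.prodMk measurable_id)
  set X : Ω → ℝ := fun ω => W s ω - W 0 ω with hX_def
  set Y : Ω → ℝ := fun ω => W r ω - W s ω with hY_def
  have hX : Measurable X := (hWt s).sub (hWt 0)
  have hY : Measurable Y := (hWt r).sub (hWt s)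
  have hlawX : Measure.map X ℙ = gaussianReal 0 s.toNNReal := by
    have := hW.gaussian_incr 0 s le_rfl hs
    rwa [sub_zero] at this
  have hlawY : Measure.map Y ℙ = gaussianReal 0 (r - s).toNNReal :=
    hW.gaussian_incr s r hs hsr
  -- independence
  have hXY : IndepFun X Y ℙ := by
    set t : Fin 3 → ℝ := ![0, s, r] with ht_def
    have ht0 : ∀ i, 0 ≤ t i := by
      intro i
      fin_cases i <;> simp [ht_def] <;> linarith
    have htm : Monotone t := by
      refine Fin.monotone_iff_le_succ.2 ?_
      intro i
      fin_cases i <;> simp [ht_def] <;> linarith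
    have hind := hW.indep_incr 2 t ht0 htm
    have h01 := hind.indepFun (i := 0) (j := 1) (by decide)
    have e0 : (fun ω => W (t (Fin.succ 0)) ω - W (t (Fin.castSucc 0)) ω) = X := by
      funext ω; rfl
    have e1 : (fun ω => W (t (Fin.succ 1)) ω - W (t (Fin.castSucc 1)) ω) = Y := by
      funext ω; rfl
    rwa [e0, e1] at h01
  have hmap : Measure.map (fun ω => (X ω, Y ω)) (ℙ : Measure Ω)
      = (gaussianReal 0 s.toNNReal).prod (gaussianReal 0 (r - s).toNNReal) := by
    rw [← hlawX, ← hlawY]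
    exact (indepFun_iff_map_prod_eq_prod_map_map hX.aemeasurable hY.aemeasurable).1 hXY
  -- a.e. rewrite of the integrand
  have hae : (fun ω => Real.cos (a * W s ω) ^ 2 * Real.cos (a * W r ω) ^ 2)
      =ᵐ[ℙ] fun ω => Real.cos (a * X ω) ^ 2 * Real.cos (a * (X ω + Y ω)) ^ 2 := by
    filter_upwards [hW.start_zero] with ω h0
    have h1 : X ω = W s ω := by rw [hX_def]; simp [h0]
    have h2 : X ω + Y ω = W r ω := by rw [hX_def, hY_def]; simp [h0]
    rw [h2, h1]
  rw [integral_congr_ae hae]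
  -- transfer to the product measure
  set F : ℝ × ℝ → ℝ := fun p => Real.cos (a * p.1) ^ 2 * Real.cos (a * (p.1 + p.2)) ^ 2 with hF_def
  have hFmeas : Measurable F := by fun_prop
  have hstep : ∫ ω, Real.cos (a * X ω) ^ 2 * Real.cos (a * (X ω + Y ω)) ^ 2 ∂ℙ
      = ∫ p, F p ∂((gaussianReal 0 s.toNNReal).prod (gaussianReal 0 (r - s).toNNReal)) := by
    rw [← hmap, integral_map (hX.prodMk hY).aemeasurable hFmeas.aestronglyMeasurable]
  rw [hstep]
  have hFbdd : ∀ p : ℝ × ℝ, |F p| ≤ 1 := by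
    intro p
    rw [hF_def]
    simp only
    rw [_root_.abs_of_nonneg (by positivity)]
    nlinarith [Real.cos_sq_le_one (a * p.1), Real.cos_sq_le_one (a * (p.1 + p.2)),
      sq_nonneg (Real.cos (a * p.1)), sq_nonneg (Real.cos (a * (p.1 + p.2)))]
  have hFint : Integrable F ((gaussianReal 0 s.toNNReal).prod (gaussianReal 0 (r - s).toNNReal)) :=
    my_integrable_bdd hFmeas.aestronglyMeasurable hFbdd
  rw [MeasureTheory.integral_prod F hFint]
  have hinner : ∀ x : ℝ, ∫ y, F (x, y) ∂(gaussianReal 0 (r - s).toNNReal)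
      = Real.cos (a * x) ^ 2 * (1 / 2 + Real.cos (2 * a * x)
          * Real.exp (-(2 * a) ^ 2 * ((r - s).toNNReal : ℝ) / 2) / 2) := by
    intro x
    rw [hF_def]
    simp only
    rw [MeasureTheory.integral_const_mul, my_inner]
  simp_rw [hinner]
  rw [my_outer]
  have hv1 : (s.toNNReal : ℝ) = s := Real.coe_toNNReal s hs
  have hv2 : ((r - s).toNNReal : ℝ) = r - s := Real.coe_toNNReal _ (by linarith)
  rw [hv1, hv2]
  rw [show -2 * a ^ 2 * r - 6 * a ^ 2 * s = -(4 * a) ^ 2 * s / 2 + -(2 * a) ^ 2 * (r - s) / 2 by ring,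
    show -2 * a ^ 2 * (r - s) = -(2 * a) ^ 2 * (r - s) / 2 by ring,
    show -2 * a ^ 2 * s = -(2 * a) ^ 2 * s / 2 by ring,
    show -2 * a ^ 2 * r = -(2 * a) ^ 2 * s / 2 + -(2 * a) ^ 2 * (r - s) / 2 by ring,
    Real.exp_add, Real.exp_add]
  ring
end
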